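/- The abstract state space of the abstract time-stamped CESK* machine is finite for any fixed program: if the address set and time set are finite, then the set of all abstract states (e, ρ, σ̂, κ, t) with e a subexpression of the program is finite. -/
import Mathlib

/- Statement 5: for a fixed program, if the address set and the time set are
   finite then the set of all abstract states (e, ρ, σ̂, κ, t), with e a
   subexpression of the program, is finite. -/

inductive Exp : Type
  | ref : String → Exp
  | lam : String → Exp → Exp
  | app : Exp → Exp → Exp
deriving DecidableEq

/-- The subexpressions of an expression. -/
def Exp.sub : Exp → List Exp
  | .ref x => [.ref x]
  | .lam x e => .lam x e :: e.sub
  | .app e₀ e₁ => .app e₀ e₁ :: (e₀.sub ++ e₁.sub)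

/-- The variables occurring in an expression. -/
def Exp.vars : Exp → List String
  | .ref x => [x]
  | .lam x e => x :: e.vars
  | .app e₀ e₁ => e₀.vars ++ e₁.vars

section Fixed

variable (p : Exp) (Addr Time : Type)

/-- Subexpressions of the program `p`. -/
def SubExp := {e : Exp // e ∈ p.sub}

/-- Variables of the program `p`. -/
def PVar := {x : String // x ∈ p.vars}

/-- Abstract environments: finite maps from the program's variables to
    addresses. -/
def AEnv := PVar p → Option Addr

/-- Abstract continuations: non-recursive, carrying a store address. -/
inductive AKont : Type
  | mt
  | ar (e : SubExp p) (ρ : AEnv p Addr) (a : Addr)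
  | fn (v : SubExp p) (ρ : AEnv p Addr) (a : Addr)

/-- Abstract storable values: closures over program subexpressions, or
    continuations. -/
inductive AStorable : Type
  | clo (v : SubExp p) (ρ : AEnv p Addr)
  | kont (κ : AKont p Addr)

/-- Abstract stores: maps from addresses to sets of storable values. -/
def AStore := Addr → Set (AStorable p Addr)

/-- Abstract states of the abstract time-stamped CESK* machine. -/
def AState := SubExp p × AEnv p Addr × AStore p Addr × AKont p Addr × Time

end Fixed

instance optFinite {A : Type*} [Finite A] : Finite (Option A) :=
  Finite.of_surjective (fun s : A ⊕ Unit => s.elim some (fun _ => none))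
    (fun o => match o with
      | none => ⟨.inr (), rfl⟩
      | some a => ⟨.inl a, rfl⟩)

instance (p : Exp) : Finite (SubExp p) := by unfold SubExp; infer_instance
instance (p : Exp) : Finite (PVar p) := by unfold PVar; infer_instance
instance (p : Exp) (Addr : Type) [Finite Addr] : Finite (AEnv p Addr) := by
  unfold AEnv; infer_instance
instance (p : Exp) (Addr : Type) [Finite Addr] : Finite (AKont p Addr) := by
  have : ∀ κ : AKont p Addr, κ = .mt ∨ (∃ e ρ a, κ = .ar e ρ a) ∨ ∃ e ρ a, κ = .fn e ρ a := by
    intro κ; cases κ <;> simp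
  let f : Option (Bool × SubExp p × AEnv p Addr × Addr) → AKont p Addr
    | none => .mt
    | some (false, e, ρ, a) => .ar e ρ a
    | some (true, e, ρ, a) => .fn e ρ a
  apply Finite.of_surjective f
  intro κ
  rcases this κ with h | ⟨e, ρ, a, h⟩ | ⟨e, ρ, a, h⟩
  · exact ⟨none, h.symm⟩
  · exact ⟨some (false, e, ρ, a), h.symm⟩
  · exact ⟨some (true, e, ρ, a), h.symm⟩
instance (p : Exp) (Addr : Type) [Finite Addr] : Finite (AStorable p Addr) := by
  let f : (SubExp p × AEnv p Addr) ⊕ AKont p Addr → AStorable p Addr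
    | .inl (e, ρ) => .clo e ρ
    | .inr κ => .kont κ
  apply Finite.of_surjective f
  intro s; cases s with
  | clo e ρ => exact ⟨.inl (e, ρ), rfl⟩
  | kont κ => exact ⟨.inr κ, rfl⟩
instance (p : Exp) (Addr : Type) [Finite Addr] : Finite (AStore p Addr) := by
  unfold AStore; infer_instance

theorem abstract_state_space_finite (p : Exp) (Addr Time : Type)
    [Finite Addr] [Finite Time] :
    Finite (AState p Addr Time) := by
  unfold AState; infer_instance
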